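/- Let A be a commutative Noetherian ring and M a finitely generated A-module with Ass M = {P_1, …, P_r}. Then there exist positive integers k_1, …, k_r such that for every subset Y of Spec A stable under specialization, the ideal ∏_{i : P_i ∈ Y} P_i^{k_i} annihilates H_Y^0(M). -/

import Mathlib

open CategoryTheory PrimeSpectrum
open scoped TensorProduct

universe u

section BasicDefs

variable {A : Type u} [CommRing A]

/-- A subset `Z` of `Spec A` is stable under specialization. -/
def SpecStable (Z : Set (PrimeSpectrum A)) : Prop :=
  ∀ p ∈ Z, zeroLocus (p.asIdeal : Set A) ⊆ Z

/-- `H_Z^0(M) = {m ∈ M | Supp (A m) ⊆ Z}`, where `Supp (A m) = V(ann m)`. -/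
def zTorsion (Z : Set (PrimeSpectrum A)) (M : Type u) [AddCommGroup M] [Module A M] :
    Submodule A M where
  carrier := {m | zeroLocus (Ideal.torsionOf A M m : Set A) ⊆ Z}
  zero_mem' := by
    intro p hp
    rw [Ideal.torsionOf_zero] at hp
    exact (p.isPrime.ne_top ((Ideal.eq_top_iff_one _).mpr (hp Submodule.mem_top))).elim
  add_mem' := by
    intro m m' hm hm'
    refine subset_trans (subset_trans (zeroLocus_anti_mono_ideal ?_)
      (by rw [zeroLocus_inf])) (Set.union_subset hm hm')
    intro r hr
    obtain ⟨h1, h2⟩ := Submodule.mem_inf.mp hr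
    rw [Ideal.mem_torsionOf_iff] at h1 h2 ⊢
    rw [smul_add, h1, h2, add_zero]
  smul_mem' := by
    intro a m hm
    refine subset_trans (zeroLocus_anti_mono_ideal ?_) hm
    intro r hr
    rw [Ideal.mem_torsionOf_iff] at hr ⊢
    rw [smul_comm, hr, smul_zero]

/-- The functor `M ↦ H_Z^0(M)`. -/
noncomputable def zTorsionFunctor (Z : Set (PrimeSpectrum A)) :
    ModuleCat.{u} A ⥤ ModuleCat.{u} A where
  obj M := ModuleCat.of A (zTorsion Z M)
  map {M N} f := ModuleCat.ofHom (LinearMap.restrict f.hom (p := zTorsion Z M) (q := zTorsion Z N) (by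
    intro m hm
    refine subset_trans (zeroLocus_anti_mono_ideal ?_) hm
    intro r hr
    rw [Ideal.mem_torsionOf_iff] at hr ⊢
    rw [← map_smul, hr, map_zero]))
  map_id M := by ext x; rfl
  map_comp f g := by ext x; rfl

instance (Z : Set (PrimeSpectrum A)) : (zTorsionFunctor.{u} (A := A) Z).Additive where
  map_add := by intros; ext x; rfl

/-- The local cohomology functor `H_Z^p`, defined as the `p`-th right derived functor of
the functor `H_Z^0`. -/
noncomputable def localCohomologyZ (Z : Set (PrimeSpectrum A)) (p : ℕ) :
    ModuleCat.{u} A ⥤ ModuleCat.{u} A :=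
  (zTorsionFunctor Z).rightDerived p

end BasicDefs

section Heights

variable {R : Type*} [CommRing R]

/-- `ht (p/q)`: the supremum of lengths of chains of primes from `q` to `p`. -/
noncomputable def relHeight (q p : PrimeSpectrum R) : ℕ∞ :=
  sSup {n : ℕ∞ | ∃ c : LTSeries (PrimeSpectrum R),
    c.head = q ∧ c.last = p ∧ (c.length : ℕ∞) = n}

/-- The supremum of lengths of chains of primes inside `S` ending at `p`. -/
noncomputable def heightIn (S : Set (PrimeSpectrum R)) (p : PrimeSpectrum R) : ℕ∞ :=
  sSup {n : ℕ∞ | ∃ c : LTSeries (PrimeSpectrum R),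
    (∀ i, c.toFun i ∈ S) ∧ c.last = p ∧ (c.length : ℕ∞) = n}

/-- Comparison map from `ℕ∞` to `ℤ ∪ {∞}`. -/
def eZ (x : ℕ∞) : WithTop ℤ := x.map (fun n : ℕ => (n : ℤ))

end Heights

section ModuleHeights

variable (A : Type u) [CommRing A]

/-- `ht_M p = dim M_p`, the supremum of lengths of chains of primes in `Supp M` ending at `p`. -/
noncomputable def htM (M : Type u) [AddCommGroup M] [Module A M] (p : PrimeSpectrum A) : ℕ∞ :=
  heightIn (Module.support A M) p

/-- `ht_M b = inf { ht_M p | p ∈ Supp M ∩ V(b) }`. -/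
noncomputable def htMIdeal (M : Type u) [AddCommGroup M] [Module A M] (b : Ideal A) : ℕ∞ :=
  sInf (htM A M '' (Module.support A M ∩ zeroLocus (b : Set A)))

/-- The condition (QU). -/
def SatisfiesQU (M : Type u) [AddCommGroup M] [Module A M] : Prop :=
  ∀ p q : PrimeSpectrum A, p ∈ Module.support A M → q ∈ Module.support A M → q ≤ p →
    relHeight q p + htM A M q = htM A M p

end ModuleHeights

section Depth

variable {R : Type*} [CommRing R]

/-- The depth of a module `M` with respect to an ideal `I`: the supremum of lengths of weakly
regular sequences on `M` with entries in `I`.  (The zero module has depth `∞`.) -/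
noncomputable def idealDepth (I : Ideal R) (M : Type*) [AddCommGroup M] [Module R M] : ℕ∞ :=
  sSup {n : ℕ∞ | ∃ rs : List R, (∀ r ∈ rs, r ∈ I) ∧
    RingTheory.Sequence.IsWeaklyRegular M rs ∧ (rs.length : ℕ∞) = n}

end Depth

section LocalDepth

variable (A : Type u) [CommRing A]

/-- `depth M_q`: the depth of the localized module `M_q` over the local ring `A_q`. -/
noncomputable def primeDepth (q : PrimeSpectrum A) (M : Type u) [AddCommGroup M] [Module A M] :
    ℕ∞ :=
  idealDepth (IsLocalRing.maximalIdeal (Localization.AtPrime q.asIdeal))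
    (LocalizedModule q.asIdeal.primeCompl M)

/-- `A_P` is a Cohen–Macaulay local ring: its depth equals its dimension `ht P`. -/
def IsCMLocalizationAt (R : Type*) [CommRing R] (P : PrimeSpectrum R) : Prop :=
  idealDepth (IsLocalRing.maximalIdeal (Localization.AtPrime P.asIdeal))
    (Localization.AtPrime P.asIdeal) = Order.height P

/-- A Cohen–Macaulay ring: all localizations at primes are Cohen–Macaulay local rings. -/
def IsCMRing (R : Type*) [CommRing R] : Prop :=
  ∀ P : PrimeSpectrum R, IsCMLocalizationAt R P

end LocalDepth

section Conditions

variable (A : Type u) [CommRing A]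

/-- A saturated chain of primes: each step is a covering relation. -/
def IsSaturatedChain {R : Type*} [CommRing R] (c : LTSeries (PrimeSpectrum R)) : Prop :=
  ∀ i : Fin c.length, c.toFun i.castSucc ⋖ c.toFun i.succ

/-- A catenary ring: any two saturated chains of primes with the same endpoints have the
same length. -/
def IsCatenaryRing (R : Type*) [CommRing R] : Prop :=
  ∀ c₁ c₂ : LTSeries (PrimeSpectrum R), c₁.head = c₂.head → c₁.last = c₂.last →
    IsSaturatedChain c₁ → IsSaturatedChain c₂ → c₁.length = c₂.length

/-- (C1): `A` is universally catenary. -/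
def IsUniversallyCatenary : Prop :=
  ∀ (B : Type u) [CommRing B] [Algebra A B], Algebra.FiniteType A B → IsCatenaryRing B

/-- (C2): all formal fibers of all localizations of `A` are Cohen–Macaulay:
for every prime `p`, and every prime `q` of `A_p`, the fiber ring
`(A_p)^ ⊗_{A_p} κ(q)` is a Cohen–Macaulay ring, where `(A_p)^` is the completion of `A_p`
along its maximal ideal and `κ(q)` is the residue field of `A_p` at `q`. -/
def HasCMFormalFibers : Prop :=
  ∀ p : PrimeSpectrum A, ∀ q : PrimeSpectrum (Localization.AtPrime p.asIdeal),
    IsCMRing ((AdicCompletion (IsLocalRing.maximalIdeal (Localization.AtPrime p.asIdeal))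
        (Localization.AtPrime p.asIdeal))
      ⊗[Localization.AtPrime p.asIdeal]
      (IsLocalRing.ResidueField (Localization.AtPrime q.asIdeal)))

/-- (C3): the Cohen–Macaulay locus of every finitely generated `A`-algebra is open. -/
def HasOpenCMLoci : Prop :=
  ∀ (B : Type u) [CommRing B] [Algebra A B], Algebra.FiniteType A B →
    IsOpen {P : PrimeSpectrum B | IsCMLocalizationAt B P}

end Conditions

section AuxLemmas

variable {A : Type u} [CommRing A]

/-- A minimal prime over an ideal `I` in a Noetherian ring is an associated prime of `A ⧸ I`. -/
lemma isAssociatedPrime_of_mem_minimalPrimes [IsNoetherianRing A]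
    {I p : Ideal A} (hp : p ∈ I.minimalPrimes) :
    IsAssociatedPrime p (A ⧸ I) := by
  classical
  obtain ⟨⟨hpp, hIp⟩, hmin⟩ := hp
  have hone : (1 : A) ∉ p := (Ideal.ne_top_iff_one p).mp hpp.ne_top
  -- the saturation of `I` at `p`
  set I' : Ideal A :=
    { carrier := {a | ∃ s, s ∉ p ∧ s * a ∈ I}
      zero_mem' := ⟨1, hone, by simpa using I.zero_mem⟩
      add_mem' := by
        rintro a b ⟨s, hs, hsa⟩ ⟨t, ht, htb⟩
        refine ⟨s * t, fun h => ((hpp.mem_or_mem h).elim hs ht), ?_⟩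
        have : s * t * (a + b) = t * (s * a) + s * (t * b) := by ring
        rw [this]
        exact I.add_mem (I.mul_mem_left _ hsa) (I.mul_mem_left _ htb)
      smul_mem' := by
        rintro c a ⟨s, hs, hsa⟩
        refine ⟨s, hs, ?_⟩
        have : s * (c • a) = c * (s * a) := by rw [smul_eq_mul]; ring
        rw [this]
        exact I.mul_mem_left _ hsa } with hI'def
  have hmemI' : ∀ a : A, a ∈ I' ↔ ∃ s, s ∉ p ∧ s * a ∈ I := fun a => Iff.rfl
  have hII' : I ≤ I' := fun a ha => ⟨1, hone, by simpa using ha⟩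
  have hI'p : I' ≤ p := by
    rintro a ⟨s, hs, hsa⟩
    exact (hpp.mem_or_mem (hIp hsa)).elim (fun h => absurd h hs) id
  have hI'ne : I' ≠ ⊤ := fun h => hone (hI'p (by rw [h]; trivial))
  -- `p ≤ radical I'`
  have hrad : p ≤ I'.radical := by
    intro a ha
    by_contra hcon
    set T : Submonoid A :=
      { carrier := {x | ∃ s, s ∉ p ∧ ∃ n : ℕ, x = s * a ^ n}
        one_mem' := ⟨1, hone, 0, by simp⟩
        mul_mem' := by
          rintro x y ⟨s, hs, n, rfl⟩ ⟨t, ht, m, rfl⟩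
          exact ⟨s * t, fun h => ((hpp.mem_or_mem h).elim hs ht), n + m, by ring⟩ }
    have hdisj : Disjoint (I : Set A) (T : Set A) := by
      rw [Set.disjoint_left]
      rintro x hx ⟨s, hs, n, rfl⟩
      exact hcon ⟨n, s, hs, hx⟩
    obtain ⟨q, hq, hIq, hdq⟩ := Ideal.exists_le_prime_disjoint _ T hdisj
    have hqp : q ≤ p := by
      intro x hx
      by_contra hxp
      exact (Set.disjoint_left.mp hdq hx) ⟨x, hxp, 0, by simp⟩
    have haq : a ∈ q := hmin ⟨hq, hIq⟩ hqp ha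
    exact (Set.disjoint_left.mp hdq haq) ⟨1, hone, 1, by ring⟩
  obtain ⟨n, hn⟩ :=
    Ideal.exists_pow_le_of_le_radical_of_fg_radical hrad (IsNoetherian.noetherian _)
  have hEx : ∃ m : ℕ, p ^ m ≤ I' := ⟨n, hn⟩
  have hkpos : Nat.find hEx ≠ 0 := by
    intro h
    have := Nat.find_spec hEx
    rw [h, pow_zero, Ideal.one_eq_top, top_le_iff] at this
    exact hI'ne this
  obtain ⟨j, hj⟩ : ∃ j, Nat.find hEx = j + 1 :=
    ⟨Nat.find hEx - 1, (Nat.succ_pred_eq_of_ne_zero hkpos).symm⟩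
  have hk1 : p ^ (j + 1) ≤ I' := hj ▸ Nat.find_spec hEx
  have hk2 : ¬p ^ j ≤ I' := Nat.find_min hEx (by omega)
  obtain ⟨x, hxpj, hxI'⟩ := SetLike.not_le_iff_exists.mp hk2
  -- `p • x ⊆ I'`
  have hpx : ∀ b ∈ p, b * x ∈ I' := by
    intro b hb
    have h1 : x * b ∈ p ^ j * p := Ideal.mul_mem_mul hxpj hb
    rw [← pow_succ] at h1
    rw [mul_comm]
    exact hk1 h1
  -- `(I' : x) ≤ p`
  have hcolon : ∀ b : A, b * x ∈ I' → b ∈ p := by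
    intro b hbx
    by_contra hbp
    obtain ⟨s, hs, hsbx⟩ := hbx
    refine hxI' ⟨s * b, fun h => ((hpp.mem_or_mem h).elim hs hbp), ?_⟩
    have : s * b * x = s * (b * x) := by ring
    rw [this]
    exact hsbx
  -- find generators of `p` and clear denominators
  obtain ⟨G, hG⟩ := IsNoetherian.noetherian p
  have hGex : ∀ b ∈ G, ∃ s, s ∉ p ∧ s * (b * x) ∈ I := by
    intro b hb
    exact hpx b (hG ▸ Ideal.subset_span hb)
  set f : A → A := fun b =>
    if h : ∃ s, s ∉ p ∧ s * (b * x) ∈ I then h.choose else 1 with hfdef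
  have hf : ∀ b ∈ G, f b ∉ p ∧ f b * (b * x) ∈ I := by
    intro b hb
    have h := hGex b hb
    simp only [hfdef, dif_pos h]
    exact ⟨h.choose_spec.1, h.choose_spec.2⟩
  set s : A := ∏ b ∈ G, f b with hsdef
  have hsp : s ∉ p := by
    intro h
    obtain ⟨b, hb, hbp⟩ := (Ideal.IsPrime.prod_mem_iff (hp := hpp)).mp h
    exact (hf b hb).1 hbp
  rw [isAssociatedPrime_iff]
  refine ⟨hpp, Ideal.Quotient.mk I (s * x), ?_⟩
  have hsm : ∀ b : A, b • Ideal.Quotient.mk I (s * x) = Ideal.Quotient.mk I (b * (s * x)) :=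
    fun b => rfl
  ext b
  rw [Submodule.mem_colon_singleton, Submodule.mem_bot, hsm, Ideal.Quotient.eq_zero_iff_mem]
  constructor
  · intro hb
    have hple : p ≤ I.colon (Ideal.span {s * x}) := by
      rw [← hG, Submodule.span_le]
      intro g hg
      rw [SetLike.mem_coe, Ideal.mem_colon_span_singleton]
      have heq : g * (s * x) = (∏ b ∈ G.erase g, f b) * (f g * (g * x)) := by
        rw [hsdef, ← Finset.mul_prod_erase G f hg]; ring
      rw [heq]
      exact I.mul_mem_left _ (hf g hg).2
    have := hple hb
    rwa [Ideal.mem_colon_span_singleton] at this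
  · intro hb
    have h1 : b * s * x ∈ I' := hII' (by rw [mul_assoc]; exact hb)
    have h2 : b * s ∈ p := hcolon _ h1
    exact (hpp.mem_or_mem h2).elim id (fun h => absurd h hsp)

/-- A minimal prime over the annihilator of an element of `M` is an associated prime of `M`. -/
lemma mem_associatedPrimes_of_mem_minimalPrimes_torsionOf [IsNoetherianRing A]
    {M : Type u} [AddCommGroup M] [Module A M] (m : M) {p : Ideal A}
    (hp : p ∈ (Ideal.torsionOf A M m).minimalPrimes) :
    p ∈ associatedPrimes A M := by
  have h1 := isAssociatedPrime_of_mem_minimalPrimes hp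
  have h2 := (Ideal.quotTorsionOfEquivSpanSingleton A M m).isAssociatedPrime_iff.mp h1
  exact h2.map_of_injective (Submodule.subtype _) (Submodule.injective_subtype _)

end AuxLemmas

open Classical in
/-- For a finitely generated module `M` over a Noetherian ring with `Ass M = {P_1, …, P_r}`,
there are positive integers `k_1, …, k_r` such that for every specialization-stable `Y`,
the ideal `∏_{P_i ∈ Y} P_i^{k_i}` annihilates `H_Y^0(M)`. -/
theorem annihilator_of_zTorsion
    (A : Type u) [CommRing A] [IsNoetherianRing A]
    (M : Type u) [AddCommGroup M] [Module A M] [Module.Finite A M]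
    (r : ℕ) (P : Fin r → PrimeSpectrum A) (hP : Function.Injective P)
    (hAss : associatedPrimes A M = Set.range fun i => (P i).asIdeal) :
    ∃ k : Fin r → ℕ, (∀ i, 0 < k i) ∧
      ∀ Y : Set (PrimeSpectrum A), SpecStable Y →
        ∀ c ∈ ∏ j ∈ Finset.univ.filter fun j => P j ∈ Y, (P j).asIdeal ^ k j,
          ∀ m ∈ zTorsion Y M, c • m = 0 := by
  classical
  -- For each subset `S` of the indices, consider the specialization-stable set
  -- `Y_S = ⋃_{i ∈ S} V(P_i)` and the submodule `N_S = H_{Y_S}^0(M)`.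
  have main : ∀ S : Finset (Fin r), ∃ K : ℕ,
      (∏ j ∈ S, (P j).asIdeal) ^ K ≤
        (zTorsion {q : PrimeSpectrum A | ∃ i ∈ S, (P i).asIdeal ≤ q.asIdeal} M).annihilator := by
    intro S
    set YS : Set (PrimeSpectrum A) := {q | ∃ i ∈ S, (P i).asIdeal ≤ q.asIdeal} with hYSdef
    set N : Submodule A M := zTorsion YS M with hNdef
    obtain ⟨G, hG⟩ := IsNoetherian.noetherian N
    have hJrad : (∏ j ∈ S, (P j).asIdeal) ≤ N.annihilator.radical := by
      rw [Ideal.radical_eq_sInf]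
      refine le_sInf ?_
      rintro q ⟨hannq, hqprime⟩
      -- the product of the torsion ideals of the generators annihilates `N`
      have h1 : ∏ g ∈ G, Ideal.torsionOf A M g ≤ N.annihilator := by
        refine le_trans Ideal.prod_le_inf ?_
        intro a ha
        rw [Submodule.mem_annihilator]
        intro x hx
        rw [← hG] at hx
        induction hx using Submodule.span_induction with
        | mem y hy =>
          have hyG : y ∈ G := hy
          have hle : G.inf (fun g => Ideal.torsionOf A M g) ≤ Ideal.torsionOf A M y :=
            Finset.inf_le hyG
          have : a ∈ Ideal.torsionOf A M y := hle ha
          rwa [Ideal.mem_torsionOf_iff] at this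
        | zero => rw [smul_zero]
        | add y z _ _ hy hz => rw [smul_add, hy, hz, add_zero]
        | smul c y _ hy => rw [smul_comm, hy, smul_zero]
      obtain ⟨g, hgG, hgq⟩ := (hqprime.prod_le).mp (le_trans h1 hannq)
      have hgN : g ∈ N := hG ▸ Submodule.subset_span hgG
      have hq : (⟨q, hqprime⟩ : PrimeSpectrum A) ∈ YS := hgN (by rwa [mem_zeroLocus, ← Ideal.span_le, Ideal.span_eq])
      obtain ⟨i, hiS, hPiq⟩ := hq
      exact le_trans (le_trans Ideal.prod_le_inf (Finset.inf_le hiS)) hPiq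
    obtain ⟨K₀, hK₀⟩ :=
      Ideal.exists_pow_le_of_le_radical_of_fg_radical hJrad (IsNoetherian.noetherian _)
    exact ⟨K₀, hK₀⟩
  choose K hK using main
  set Kmax : ℕ := max 1 ((Finset.univ : Finset (Finset (Fin r))).sup K) with hKmaxdef
  have hKmax : ∀ S : Finset (Fin r), K S ≤ Kmax :=
    fun S => le_trans (Finset.le_sup (Finset.mem_univ S)) (le_max_right _ _)
  refine ⟨fun _ => Kmax, fun _ => lt_of_lt_of_le one_pos (le_max_left _ _), ?_⟩
  intro Y hY c hc m hm
  set S : Finset (Fin r) := Finset.univ.filter fun j => P j ∈ Y with hSdef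
  -- `m` lies in `N_S`
  have hmN : m ∈ zTorsion {q : PrimeSpectrum A | ∃ i ∈ S, (P i).asIdeal ≤ q.asIdeal} M := by
    intro q hq
    rw [mem_zeroLocus, ← Ideal.span_le, Ideal.span_eq] at hq
    obtain ⟨p, hpmin, hpq⟩ := Ideal.exists_minimalPrimes_le (J := q.asIdeal) hq
    have hpprime : p.IsPrime := hpmin.1.1
    have hpY : (⟨p, hpprime⟩ : PrimeSpectrum A) ∈ Y := by
      apply hm
      rw [mem_zeroLocus, ← Ideal.span_le, Ideal.span_eq]
      exact hpmin.1.2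
    have hpAss : p ∈ associatedPrimes A M :=
      mem_associatedPrimes_of_mem_minimalPrimes_torsionOf m hpmin
    rw [hAss] at hpAss
    obtain ⟨i, hi⟩ := hpAss
    have hPi : P i = ⟨p, hpprime⟩ := PrimeSpectrum.ext hi
    refine ⟨i, ?_, ?_⟩
    · rw [hSdef, Finset.mem_filter]
      exact ⟨Finset.mem_univ i, hPi ▸ hpY⟩
    · rw [hPi]
      exact hpq
  -- `c` lies in the annihilator of `N_S`
  have hc2 : c ∈ (zTorsion {q : PrimeSpectrum A | ∃ i ∈ S, (P i).asIdeal ≤ q.asIdeal} M).annihilator := by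
    apply hK S
    apply Ideal.pow_le_pow_right (hKmax S)
    rw [← Finset.prod_pow]
    exact hc
  exact Submodule.mem_annihilator.mp hc2 m hmN
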